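/- Let x_1,…,x_n ∈ ℝ^d be vectors such that S = Σ_{j=1}^n x_j x_j^T is invertible, and let w_1,…,w_n > 0. Then S^{-1} (Σ_{j=1}^n w_j x_j x_j^T) S^{-1} − (Σ_{j=1}^n w_j^{-1} x_j x_j^T)^{-1} is positive semidefinite. -/

import Mathlib

open Matrix

private lemma sum_mulVec' {n d : ℕ} (M : Fin n → Matrix (Fin d) (Fin d) ℝ) (v : Fin d → ℝ) :
    (∑ j, M j) *ᵥ v = ∑ j, M j *ᵥ v := by
  ext i
  simp [Matrix.mulVec, dotProduct, Matrix.sum_apply, Finset.sum_mul]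
  exact Finset.sum_comm

private lemma vmv_mulVec {d : ℕ} (u v : Fin d → ℝ) :
    Matrix.vecMulVec u u *ᵥ v = (u ⬝ᵥ v) • u := by
  ext i
  simp [Matrix.vecMulVec_apply, Matrix.mulVec, dotProduct, Finset.mul_sum, mul_assoc,
    mul_comm, mul_left_comm]

private lemma vmv_psd {m : Type*} [Fintype m] (u : m → ℝ) :
    (Matrix.vecMulVec u u).PosSemidef := by
  rw [Matrix.posSemidef_iff_dotProduct_mulVec]
  constructor
  · ext i j
    simp [Matrix.conjTranspose_apply, Matrix.vecMulVec_apply, mul_comm]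
  · intro v
    have h : star v ⬝ᵥ (Matrix.vecMulVec u u) *ᵥ v = (u ⬝ᵥ v) * (u ⬝ᵥ v) := by
      simp [Matrix.vecMulVec_apply, Matrix.mulVec, dotProduct, Finset.mul_sum,
        Finset.sum_mul, mul_assoc, mul_comm, mul_left_comm]
    rw [h]
    exact mul_self_nonneg _

private lemma quad_sum {n d : ℕ} (x : Fin n → Fin d → ℝ) (c : Fin n → ℝ) (v : Fin d → ℝ) :
    star v ⬝ᵥ ((∑ j, c j • Matrix.vecMulVec (x j) (x j)) *ᵥ v)
      = ∑ j, c j * (dotProduct (x j) v) ^ 2 := by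
  rw [sum_mulVec' (fun j => c j • Matrix.vecMulVec (x j) (x j)) v]
  rw [show (star v ⬝ᵥ ∑ j, (c j • Matrix.vecMulVec (x j) (x j)) *ᵥ v)
      = ∑ j, star v ⬝ᵥ ((c j • Matrix.vecMulVec (x j) (x j)) *ᵥ v) by
    simp [dotProduct, Finset.mul_sum]
    exact Finset.sum_comm]
  refine Finset.sum_congr rfl fun j _ => ?_
  rw [Matrix.smul_mulVec, vmv_mulVec]
  have : star v ⬝ᵥ x j = x j ⬝ᵥ v := by simp [dotProduct, mul_comm]
  simp only [dotProduct_smul, smul_eq_mul, this]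
  ring

private lemma herm_sum {n d : ℕ} (x : Fin n → Fin d → ℝ) (c : Fin n → ℝ) :
    (∑ j, c j • Matrix.vecMulVec (x j) (x j)).IsHermitian := by
  unfold Matrix.IsHermitian
  ext i k
  simp [Matrix.conjTranspose_apply, Matrix.sum_apply, Matrix.vecMulVec_apply, mul_comm,
    mul_left_comm]

theorem stmt_1 (n d : ℕ) (x : Fin n → Fin d → ℝ) (w : Fin n → ℝ)
    (hw : ∀ j, 0 < w j)
    (hS : IsUnit (∑ j, Matrix.vecMulVec (x j) (x j)).det) :
    ((∑ j, Matrix.vecMulVec (x j) (x j))⁻¹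
        * (∑ j, w j • Matrix.vecMulVec (x j) (x j))
        * (∑ j, Matrix.vecMulVec (x j) (x j))⁻¹
      - (∑ j, (w j)⁻¹ • Matrix.vecMulVec (x j) (x j))⁻¹).PosSemidef := by
  classical
  set S : Matrix (Fin d) (Fin d) ℝ := ∑ j, Matrix.vecMulVec (x j) (x j) with hSdef
  set A : Matrix (Fin d) (Fin d) ℝ := ∑ j, w j • Matrix.vecMulVec (x j) (x j) with hAdef
  set B : Matrix (Fin d) (Fin d) ℝ := ∑ j, (w j)⁻¹ • Matrix.vecMulVec (x j) (x j) with hBdef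
  -- S rewritten with scalars 1
  have hS1 : S = ∑ j, (1 : ℝ) • Matrix.vecMulVec (x j) (x j) := by simp [hSdef]
  have hSherm : S.IsHermitian := by rw [hS1]; exact herm_sum x _
  haveI : Invertible S := S.invertibleOfIsUnitDet hS
  -- kernel property
  have hker : ∀ v : Fin d → ℝ, (∀ j, dotProduct (x j) v = 0) → v = 0 := by
    intro v hv
    have hSv : S *ᵥ v = 0 := by
      rw [hSdef, sum_mulVec']
      refine Finset.sum_eq_zero fun j _ => ?_
      rw [vmv_mulVec, hv j, zero_smul]
    have := Matrix.mulVec_injective_of_invertible S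
    have h0 : S *ᵥ v = S *ᵥ 0 := by rw [hSv, Matrix.mulVec_zero]
    exact this h0
  -- B is positive definite
  have hBpd : B.PosDef := by
    refine Matrix.posDef_iff_dotProduct_mulVec.2 ⟨by rw [hBdef]; exact herm_sum x _, fun v hv => ?_⟩
    have hq := quad_sum x (fun j => (w j)⁻¹) v
    rw [← hBdef] at hq
    rw [hq]
    have hnn : ∀ j ∈ Finset.univ, (0:ℝ) ≤ (w j)⁻¹ * (dotProduct (x j) v) ^ 2 :=
      fun j _ => mul_nonneg (inv_nonneg.2 (hw j).le) (sq_nonneg _)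
    rcases (Finset.sum_nonneg hnn).lt_or_eq with h | h
    · exact h
    · exfalso
      apply hv
      apply hker
      intro j
      have := (Finset.sum_eq_zero_iff_of_nonneg hnn).1 h.symm j (Finset.mem_univ j)
      have hsq : (dotProduct (x j) v) ^ 2 = 0 := by
        have hwj : (w j)⁻¹ ≠ 0 := inv_ne_zero (hw j).ne'
        exact (mul_eq_zero.1 this).resolve_left hwj
      exact pow_eq_zero_iff (by norm_num) |>.1 hsq
  haveI : Invertible B := B.invertibleOfIsUnitDet ((Matrix.isUnit_iff_isUnit_det B).1 hBpd.isUnit)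
  -- block matrix
  set y : Fin n → (Fin d ⊕ Fin d) → ℝ :=
    fun j => Sum.elim (Real.sqrt ((w j)⁻¹) • x j) (Real.sqrt (w j) • x j) with hy
  have hblock : Matrix.fromBlocks B S S A = ∑ j, Matrix.vecMulVec (y j) (y j) := by
    ext i k
    have sq_inv : ∀ j, Real.sqrt ((w j)⁻¹) * Real.sqrt ((w j)⁻¹) = (w j)⁻¹ :=
      fun j => Real.mul_self_sqrt (inv_nonneg.2 (hw j).le)
    have sq_w : ∀ j, Real.sqrt (w j) * Real.sqrt (w j) = w j :=
      fun j => Real.mul_self_sqrt (hw j).le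
    have sq_mix : ∀ j, Real.sqrt ((w j)⁻¹) * Real.sqrt (w j) = 1 := by
      intro j
      rw [Real.sqrt_inv]
      exact inv_mul_cancel₀ (Real.sqrt_ne_zero'.2 (hw j))
    rcases i with i | i <;> rcases k with k | k <;>
      simp [Matrix.sum_apply, Matrix.vecMulVec_apply, hy, Matrix.fromBlocks, hBdef, hSdef,
        hAdef] <;>
      refine Finset.sum_congr rfl fun j _ => ?_
    all_goals {
      have hne : Real.sqrt (w j) ≠ 0 := Real.sqrt_ne_zero'.2 (hw j)
      have hms : Real.sqrt (w j) * Real.sqrt (w j) = w j := Real.mul_self_sqrt (hw j).le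
      have hmi : (Real.sqrt (w j))⁻¹ * (Real.sqrt (w j))⁻¹ = (w j)⁻¹ := by
        rw [← mul_inv, hms]
      try field_simp [hms]
      try (ring_nf; rw [hms])
      try ring
      try (rw [sq, hms]; ring)
      try (rw [Real.sq_sqrt (hw j).le, mul_assoc, mul_inv_cancel₀ (hw j).ne', mul_one])
    }
  have hblockpsd : (Matrix.fromBlocks B S S A).PosSemidef := by
    rw [hblock]
    exact Finset.sum_induction _ _ (fun a b ha hb => ha.add hb)
      (Matrix.PosSemidef.zero) (fun j _ => vmv_psd (y j))
  have hSchur : (A - S * B⁻¹ * S).PosSemidef := by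
    have h := (Matrix.PosDef.fromBlocks₁₁ (A := B) S A hBpd)
    rw [hSherm.eq] at h
    exact h.1 hblockpsd
  have hconj := hSchur.conjTranspose_mul_mul_same S⁻¹
  have hSinvH : (S⁻¹)ᴴ = S⁻¹ := by
    rw [Matrix.conjTranspose_nonsing_inv, hSherm.eq]
  rw [hSinvH] at hconj
  have halg : S⁻¹ * (A - S * B⁻¹ * S) * S⁻¹ = S⁻¹ * A * S⁻¹ - B⁻¹ := by
    rw [Matrix.mul_sub, Matrix.sub_mul]
    congr 1
    rw [show S⁻¹ * (S * B⁻¹ * S) * S⁻¹ = S⁻¹ * S * (B⁻¹ * (S * S⁻¹)) by noncomm_ring,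
      Matrix.nonsing_inv_mul S hS, Matrix.mul_nonsing_inv S hS, Matrix.one_mul, Matrix.mul_one]
  rwa [halg] at hconj
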